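/- Under the standing hypotheses with 1_g ≠ 0 for all g ∈ 𝒢, let ℋ ∈ wSub_gt(𝒢) with the chosen decomposition and transversals, let T = S^{α_ℋ} and T_{y_j} = S_{y_j}^{α_{ℋ_j(y_j)}} for 1 ≤ j ≤ r, and let g ∈ 𝒢. Then g ∈ 𝒢_T if and only if there exists 1 ≤ k ≤ r such that s(g), t(g) ∈ Y_k and τ_k(g) ∈ 𝒢(y_k)_{T_{y_k}}. -/

import Mathlib

open CategoryTheory

namespace PaperGalois

/-- A unital partial action of a groupoid (with object/morphism data given by a
`CategoryTheory.Groupoid` structure on `Obj`) on a commutative ring `S`.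
For a morphism `g : a ⟶ b` (source `a`, target `b`), `e g` is the central idempotent
with `S_g = S • e g`, and `act g s` encodes `α_g(s · 1_{g⁻¹})`. -/
structure UPA (Obj : Type*) [Groupoid Obj] (S : Type*) [CommRing S] where
  e : ∀ ⦃a b : Obj⦄, (a ⟶ b) → S
  act : ∀ ⦃a b : Obj⦄, (a ⟶ b) → S → S
  idem : ∀ ⦃a b : Obj⦄ (g : a ⟶ b), e g * e g = e g
  e_le : ∀ ⦃a b : Obj⦄ (g : a ⟶ b), e g * e (𝟙 b) = e g
  act_proj : ∀ ⦃a b : Obj⦄ (g : a ⟶ b) (s : S), act g (s * e (Groupoid.inv g)) = act g s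
  act_mem : ∀ ⦃a b : Obj⦄ (g : a ⟶ b) (s : S), act g s * e g = act g s
  act_add : ∀ ⦃a b : Obj⦄ (g : a ⟶ b) (s t : S), act g (s + t) = act g s + act g t
  act_mul : ∀ ⦃a b : Obj⦄ (g : a ⟶ b) (s t : S), act g (s * t) = act g s * act g t
  act_unit : ∀ ⦃a b : Obj⦄ (g : a ⟶ b), act g (e (Groupoid.inv g)) = e g
  act_id : ∀ (a : Obj) (s : S), act (𝟙 a) s = s * e (𝟙 a)
  act_inv : ∀ ⦃a b : Obj⦄ (g : a ⟶ b) (s : S),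
      act (Groupoid.inv g) (act g s) = s * e (Groupoid.inv g)
  act_comp : ∀ ⦃a b c : Obj⦄ (h : a ⟶ b) (g : b ⟶ c) (s : S),
      act g (act h s) = act (h ≫ g) s * e g

namespace UPA

variable {Obj : Type*} [Groupoid Obj] {S : Type*} [CommRing S] (α : UPA Obj S)

lemma act_zero ⦃a b : Obj⦄ (g : a ⟶ b) : α.act g 0 = 0 := by
  have h := α.act_add g 0 0
  rw [add_zero] at h
  exact (left_eq_add.mp h)

lemma act_neg ⦃a b : Obj⦄ (g : a ⟶ b) (s : S) : α.act g (-s) = -(α.act g s) := by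
  have h := α.act_add g s (-s)
  rw [add_neg_cancel, α.act_zero] at h
  exact (eq_neg_of_add_eq_zero_right h.symm)

lemma act_one ⦃a b : Obj⦄ (g : a ⟶ b) : α.act g 1 = α.e g := by
  have h := α.act_proj g 1
  rw [one_mul, α.act_unit] at h
  exact h.symm

lemma act_e_src ⦃a b : Obj⦄ (g : a ⟶ b) : α.act g (α.e (𝟙 a)) = α.e g := by
  have h1 : α.e (𝟙 a) * α.e (Groupoid.inv g) = α.e (Groupoid.inv g) := by
    rw [mul_comm]; exact α.e_le (Groupoid.inv g)
  have h2 := α.act_proj g (α.e (𝟙 a))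
  rw [h1, α.act_unit] at h2
  exact h2.symm

/-- The set of `α`-invariant elements of `S` relative to a subgroupoid `H`:
`S^{α_H} = {s ∈ S : α_h(s·1_{h⁻¹}) = s·1_h for all h ∈ H}`. -/
def invSet (H : Subgroupoid Obj) : Set S :=
  {s : S | ∀ ⦃a b : Obj⦄ (h : a ⟶ b), h ∈ H.arrows a b → α.act h s = s * α.e h}

/-- The invariants `S_y^{α_A}` of the corner ring `S_y = S·1_y` under a set `A`
of loops at `y`. -/
def grpInvSet (y : Obj) (A : Set (y ⟶ y)) : Set S :=
  {s : S | s * α.e (𝟙 y) = s ∧ ∀ g ∈ A, α.act g s = s * α.e g}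

/-- The arrows `a ⟶ b` of the groupoid acting trivially on the subset `T ⊆ S`;
for `T` a subring this gives `𝒢_T`. -/
def fixingSet (T : Set S) (a b : Obj) : Set (a ⟶ b) :=
  {g : a ⟶ b | ∀ t ∈ T, α.act g t = t * α.e g}

/-- `⊕_{y ∈ Z} S_y`, the part of `S` supported on a set `Z` of objects. -/
def partSet (Z : Set Obj) : Set S :=
  {s : S | ∀ y : Obj, y ∉ Z → s * α.e (𝟙 y) = 0}

/-- `T·1_y ⊆ S_y` for a subset `T ⊆ S`. -/
def cornerSet (T : Set S) (y : Obj) : Set S :=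
  (fun t => t * α.e (𝟙 y)) '' T

/-- `T' ⊆ S_y` is `α_{𝒢(y,z)}`-strong. -/
def strongAt (T' : Set S) (a b : Obj) : Prop :=
  ∀ g h : a ⟶ b, (h ≫ Groupoid.inv g) ∉ α.fixingSet T' a a →
    ∀ f : S, f * f = f → f ≠ 0 → (f * α.e g = f ∨ f * α.e h = f) →
      ∃ t ∈ T', α.act g t * f ≠ α.act h t * f

/-- `T ⊆ S` is `α`-strong. -/
def IsStrong (T : Set S) : Prop :=
  ∀ a b : Obj, α.strongAt (α.cornerSet T a) a b

/-- Existence of a partial Galois coordinate system for the restriction of `α` to the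
subgroupoid `H` acting on `S_H ⊆ S` (for `H = ⊤`, `Sub = univ` this says that
`S^{α_𝒢} ⊆ S` is an `α_𝒢`-partial Galois extension). -/
def IsGaloisCoordSystem (H : Subgroupoid Obj) (Sub : Set S) : Prop :=
  ∃ (m : ℕ) (av bv : Fin m → S),
    (∀ i, av i ∈ Sub) ∧ (∀ i, bv i ∈ Sub) ∧
    (∀ ⦃a b : Obj⦄ (g : a ⟶ b), g ∈ H.arrows a b → a ≠ b →
        ∑ i, av i * α.act g (bv i) = 0) ∧
    (∀ (a : Obj) (g : a ⟶ a), g ∈ H.arrows a a → g ≠ 𝟙 a →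
        ∑ i, av i * α.act g (bv i) = 0) ∧
    (∀ a : Obj, a ∈ H.objs → ∑ i, av i * α.act (𝟙 a) (bv i) = α.e (𝟙 a))

/-- Group-type condition for the restriction of `α` to `H`, at the base object `u`:
there is a transversal (inside `H`) from `u` to every object of the `H`-component of `u`
whose ideals are as large as possible. -/
def IsGroupTypeAt (H : Subgroupoid Obj) (u : Obj) : Prop :=
  ∃ σ : ∀ v : Obj, (H.arrows u v).Nonempty → (u ⟶ v),
    (∀ v hv, σ v hv ∈ H.arrows u v) ∧
    (∀ h, σ u h = 𝟙 u) ∧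
    (∀ v hv, α.e (Groupoid.inv (σ v hv)) = α.e (𝟙 u) ∧ α.e (σ v hv) = α.e (𝟙 v))

/-- The restriction `α_H` of `α` to the subgroupoid `H` is of group-type. -/
def IsGroupType (H : Subgroupoid Obj) : Prop :=
  ∀ u ∈ H.objs, α.IsGroupTypeAt H u

end UPA

structure SubCorner (S : Type*) [CommRing S] where
  carrier : Set S
  unit : S
  unit_mem : unit ∈ carrier
  mul_unit : ∀ s ∈ carrier, s * unit = s
  add_mem : ∀ ⦃s t : S⦄, s ∈ carrier → t ∈ carrier → s + t ∈ carrier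
  mul_mem : ∀ ⦃s t : S⦄, s ∈ carrier → t ∈ carrier → s * t ∈ carrier
  neg_mem : ∀ ⦃s : S⦄, s ∈ carrier → -s ∈ carrier
  zero_mem : (0 : S) ∈ carrier

namespace SubCorner

variable {S : Type*} [CommRing S]

lemma nsmul_mem (P : SubCorner S) (n : ℕ) {s : S} (hs : s ∈ P.carrier) :
    n • s ∈ P.carrier := by
  induction n with
  | zero => simpa using P.zero_mem
  | succ n ih => rw [succ_nsmul]; exact P.add_mem ih hs

lemma zsmul_mem (P : SubCorner S) (n : ℤ) {s : S} (hs : s ∈ P.carrier) :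
    n • s ∈ P.carrier := by
  cases n with
  | ofNat n => simpa [natCast_zsmul] using P.nsmul_mem n hs
  | negSucc n => rw [negSucc_zsmul]; exact P.neg_mem (P.nsmul_mem (n+1) hs)

instance (P : SubCorner S) : CommRing ↥P.carrier where
  add a b := ⟨a.1 + b.1, P.add_mem a.2 b.2⟩
  mul a b := ⟨a.1 * b.1, P.mul_mem a.2 b.2⟩
  neg a := ⟨-a.1, P.neg_mem a.2⟩
  zero := ⟨0, P.zero_mem⟩
  one := ⟨P.unit, P.unit_mem⟩
  add_assoc a b c := Subtype.ext (add_assoc _ _ _)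
  zero_add a := Subtype.ext (zero_add _)
  add_zero a := Subtype.ext (add_zero _)
  add_comm a b := Subtype.ext (add_comm _ _)
  mul_assoc a b c := Subtype.ext (mul_assoc _ _ _)
  one_mul a := Subtype.ext (by
    show P.unit * a.1 = a.1
    rw [mul_comm]; exact P.mul_unit a.1 a.2)
  mul_one a := Subtype.ext (P.mul_unit a.1 a.2)
  left_distrib a b c := Subtype.ext (left_distrib _ _ _)
  right_distrib a b c := Subtype.ext (right_distrib _ _ _)
  mul_comm a b := Subtype.ext (mul_comm _ _)
  zero_mul a := Subtype.ext (zero_mul _)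
  mul_zero a := Subtype.ext (mul_zero _)
  neg_add_cancel a := Subtype.ext (neg_add_cancel _)
  nsmul n a := ⟨n • a.1, P.nsmul_mem n a.2⟩
  nsmul_zero a := Subtype.ext (zero_nsmul _)
  nsmul_succ n a := Subtype.ext (succ_nsmul _ _)
  zsmul n a := ⟨n • a.1, P.zsmul_mem n a.2⟩
  zsmul_zero' a := Subtype.ext (zero_zsmul _)
  zsmul_succ' n a := Subtype.ext (by
    show ((n.succ : ℤ)) • a.1 = (n : ℤ) • a.1 + a.1
    rw [Int.natCast_succ, add_zsmul, one_zsmul])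
  zsmul_neg' n a := Subtype.ext (by
    show (Int.negSucc n) • a.1 = -(((n.succ : ℤ)) • a.1)
    rw [negSucc_zsmul]
    norm_cast)

def incl {P Q : SubCorner S} (hle : P.carrier ⊆ Q.carrier) (hu : P.unit = Q.unit) :
    ↥P.carrier →+* ↥Q.carrier where
  toFun a := ⟨a.1, hle a.2⟩
  map_one' := Subtype.ext hu
  map_mul' _ _ := rfl
  map_zero' := rfl
  map_add' _ _ := rfl

def IsSepExt (P Q : SubCorner S) (hle : P.carrier ⊆ Q.carrier) (hu : P.unit = Q.unit) : Prop :=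
  letI : Algebra ↥P.carrier ↥Q.carrier := (incl hle hu).toAlgebra
  ∃ ε : TensorProduct ↥P.carrier ↥Q.carrier ↥Q.carrier,
    (∀ t : ↥Q.carrier,
        (TensorProduct.tmul ↥P.carrier t (1 : ↥Q.carrier)) * ε
          = ε * (TensorProduct.tmul ↥P.carrier (1 : ↥Q.carrier) t)) ∧
    LinearMap.mul' ↥P.carrier ↥Q.carrier ε = 1

end SubCorner

/-- A `Subring` of `S`, seen as a corner subring with identity `1`. -/
def Subring.toSC {S : Type*} [CommRing S] (T : Subring S) : SubCorner S where
  carrier := (T : Set S)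
  unit := 1
  unit_mem := T.one_mem
  mul_unit := fun s _ => mul_one s
  add_mem := fun _ _ hs ht => T.add_mem hs ht
  mul_mem := fun _ _ hs ht => T.mul_mem hs ht
  neg_mem := fun _ hs => T.neg_mem hs
  zero_mem := T.zero_mem

namespace UPA

variable {Obj : Type*} [Groupoid Obj] {S : Type*} [CommRing S] (α : UPA Obj S)

lemma invSet_one_mem (H : Subgroupoid Obj) : (1 : S) ∈ α.invSet H :=
  fun _ _ h _ => by rw [α.act_one h, one_mul]

lemma invSet_zero_mem (H : Subgroupoid Obj) : (0 : S) ∈ α.invSet H :=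
  fun _ _ h _ => by rw [α.act_zero h, zero_mul]

lemma invSet_add_mem (H : Subgroupoid Obj) {s t : S} (hs : s ∈ α.invSet H)
    (ht : t ∈ α.invSet H) : s + t ∈ α.invSet H :=
  fun _ _ h hH => by rw [α.act_add h, hs h hH, ht h hH, add_mul]

lemma invSet_mul_mem (H : Subgroupoid Obj) {s t : S} (hs : s ∈ α.invSet H)
    (ht : t ∈ α.invSet H) : s * t ∈ α.invSet H :=
  fun _ _ h hH => by
    rw [α.act_mul h, hs h hH, ht h hH, mul_mul_mul_comm, α.idem h]

lemma invSet_neg_mem (H : Subgroupoid Obj) {s : S} (hs : s ∈ α.invSet H) :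
    -s ∈ α.invSet H :=
  fun _ _ h hH => by rw [α.act_neg h, hs h hH, neg_mul]

/-- The subring of invariants `S^{α_H}` of `S`, a genuine unital subring of `S`. -/
def invariantsSubring (H : Subgroupoid Obj) : Subring S where
  carrier := α.invSet H
  one_mem' := α.invSet_one_mem H
  zero_mem' := α.invSet_zero_mem H
  add_mem' := α.invSet_add_mem H
  mul_mem' := α.invSet_mul_mem H
  neg_mem' := α.invSet_neg_mem H

/-- `S^{α_H}` as a corner subring of `S` (with identity `1`). -/
def invariantsSC (H : Subgroupoid Obj) : SubCorner S where
  carrier := α.invSet H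
  unit := 1
  unit_mem := α.invSet_one_mem H
  mul_unit := fun s _ => mul_one s
  add_mem := fun _ _ hs ht => α.invSet_add_mem H hs ht
  mul_mem := fun _ _ hs ht => α.invSet_mul_mem H hs ht
  neg_mem := fun _ hs => α.invSet_neg_mem H hs
  zero_mem := α.invSet_zero_mem H

lemma grpInvSet_unit_mem (y : Obj) (A : Set (y ⟶ y)) :
    α.e (𝟙 y) ∈ α.grpInvSet y A := by
  refine ⟨α.idem (𝟙 y), fun g _ => ?_⟩
  rw [α.act_e_src g]
  have : α.e (𝟙 y) * α.e g = α.e g := by rw [mul_comm]; exact α.e_le g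
  rw [this]

/-- `S_y^{α_A}` as a corner subring of `S` (with identity `1_y`). -/
def grpInvSC (y : Obj) (A : Set (y ⟶ y)) : SubCorner S where
  carrier := α.grpInvSet y A
  unit := α.e (𝟙 y)
  unit_mem := α.grpInvSet_unit_mem y A
  mul_unit := fun _ hs => hs.1
  add_mem := fun s t hs ht =>
    ⟨by rw [add_mul, hs.1, ht.1], fun g hg => by
      rw [α.act_add g, hs.2 g hg, ht.2 g hg, add_mul]⟩
  mul_mem := fun s t hs ht =>
    ⟨by rw [mul_assoc, ht.1], fun g hg => by
      rw [α.act_mul g, hs.2 g hg, ht.2 g hg, mul_mul_mul_comm, α.idem g]⟩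
  neg_mem := fun s hs =>
    ⟨by rw [neg_mul, hs.1], fun g hg => by rw [α.act_neg g, hs.2 g hg, neg_mul]⟩
  zero_mem := ⟨zero_mul _, fun g _ => by rw [α.act_zero g, zero_mul]⟩

lemma invSet_le (H : Subgroupoid Obj) :
    α.invSet (Subgroupoid.full (Set.univ : Set Obj)) ⊆ α.invSet H :=
  fun _ hs _ _ h _ => hs h ⟨trivial, trivial⟩

lemma invSet_le_subring {T : Subring S}
    (h : ∀ s ∈ α.invSet (Subgroupoid.full (Set.univ : Set Obj)), s ∈ T) :
    (α.invariantsSC (Subgroupoid.full (Set.univ : Set Obj))).carrier ⊆ (Subring.toSC T).carrier :=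
  h

lemma grpInvSet_le (y : Obj) (A : Set (y ⟶ y)) :
    α.grpInvSet y (Set.univ : Set (y ⟶ y)) ⊆ α.grpInvSet y A :=
  fun _ hs => ⟨hs.1, fun g _ => hs.2 g trivial⟩

end UPA

/-- **Lemma 4.2.**  Standing hypotheses, with `1_g ≠ 0` for all `g ∈ 𝒢`.  Let
`ℋ ∈ wSub_gt(𝒢)` with decomposition into connected components `ℋ_j` on `Y_j`
(`𝒢₀ = Y₁ ∪̇ … ∪̇ Y_r`), chosen `y_j ∈ Y_j` and transversals
`τ_j = (τ_{j,z})_{z ∈ Y_j}` in `ℋ_j` for `y_j` satisfying the group-type condition.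
Let `T = S^{α_ℋ}` and `T_{y_j} = S_{y_j}^{α_{ℋ_j(y_j)}}`.  Then for `g ∈ 𝒢`:
`g ∈ 𝒢_T` if and only if there is `1 ≤ k ≤ r` with `s(g), t(g) ∈ Y_k` and
`τ_k(g) = τ_{k,t(g)}⁻¹ g τ_{k,s(g)} ∈ 𝒢(y_k)_{T_{y_k}}`. -/
theorem mem_fixing_iff_component
    {Obj : Type*} [Groupoid Obj] [Fintype Obj] [∀ a b : Obj, Finite (a ⟶ b)]
    {S : Type*} [CommRing S] (α : UPA Obj S)
    (hsum : ∑ y : Obj, α.e (𝟙 y) = 1)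
    (horth : ∀ y z : Obj, y ≠ z → α.e (𝟙 y) * α.e (𝟙 z) = 0)
    (hconn : ∀ a b : Obj, Nonempty (a ⟶ b))
    (x : Obj) (τ : ∀ y : Obj, x ⟶ y) (hτx : τ x = 𝟙 x)
    (hgt : ∀ y : Obj, α.e (Groupoid.inv (τ y)) = α.e (𝟙 x) ∧ α.e (τ y) = α.e (𝟙 y))
    (hne : ∀ ⦃a b : Obj⦄ (g : a ⟶ b), α.e g ≠ 0)
    (H : Subgroupoid Obj) (hwide : H.IsWide)
    (r : ℕ) (Y : Fin r → Set Obj)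
    (hYcover : ∀ u : Obj, ∃ j, u ∈ Y j)
    (hYconn : ∀ j, ∀ u ∈ Y j, ∀ v ∈ Y j, (H.arrows u v).Nonempty)
    (hYdisj : ∀ j k, j ≠ k → ∀ u ∈ Y j, ∀ v ∈ Y k, H.arrows u v = ∅)
    (y : Fin r → Obj) (hy : ∀ j, y j ∈ Y j)
    (τj : ∀ (j : Fin r) (z : Obj), z ∈ Y j → ((y j) ⟶ z))
    (hτjH : ∀ j z hz, τj j z hz ∈ H.arrows (y j) z)
    (hτjid : ∀ j, τj j (y j) (hy j) = 𝟙 (y j))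
    (hτjgt : ∀ j z hz, α.e (Groupoid.inv (τj j z hz)) = α.e (𝟙 (y j)) ∧
        α.e (τj j z hz) = α.e (𝟙 z)) :
    ∀ ⦃u v : Obj⦄ (g : u ⟶ v),
      g ∈ α.fixingSet (α.invSet H) u v ↔
        ∃ (k : Fin r) (hu : u ∈ Y k) (hv : v ∈ Y k),
          (τj k u hu ≫ g ≫ Groupoid.inv (τj k v hv)) ∈
            α.fixingSet (α.grpInvSet (y k) (H.arrows (y k) (y k))) (y k) (y k) := by
  classical
  -- basic consequences of the axioms
  have eInv : ∀ ⦃a b : Obj⦄ (p : a ⟶ b),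
      α.e (Groupoid.inv p) * α.e (𝟙 a) = α.e (Groupoid.inv p) :=
    fun a b p => α.e_le (Groupoid.inv p)
  have hEcomp : ∀ ⦃a b c : Obj⦄ (p : a ⟶ b) (q : b ⟶ c),
      α.act q (α.e p) = α.e (p ≫ q) * α.e q := by
    intro a b c p q
    rw [← α.act_one p, α.act_comp, α.act_one]
  have key1 : ∀ ⦃a b c : Obj⦄ (p : a ⟶ b) (q : b ⟶ c), α.e p = α.e (𝟙 b) →
      α.e (p ≫ q) * α.e q = α.e q := by
    intro a b c p q hp
    rw [← hEcomp p q, hp, α.act_e_src]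
  have absorbAct : ∀ ⦃a b : Obj⦄ (p : a ⟶ b) (s : S),
      α.act p s * α.e (𝟙 b) = α.act p s := by
    intro a b p s
    rw [← α.act_mem p s, mul_assoc, α.e_le p]
  have stepProj : ∀ ⦃a b : Obj⦄ (q : a ⟶ b) (s : S),
      α.act q s = α.act q (s * α.e (𝟙 a)) := by
    intro a b q s
    have h : s * α.e (Groupoid.inv q) = s * α.e (𝟙 a) * α.e (Groupoid.inv q) := by
      rw [mul_assoc, mul_comm (α.e (𝟙 a)) (α.e (Groupoid.inv q)), eInv q]
    rw [← α.act_proj q s, h, α.act_proj]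
  -- Lemma A : pulling an invariant along the transversal
  have lemA : ∀ (k : Fin r) (t : S), t ∈ α.invSet H → ∀ (z : Obj) (hz : z ∈ Y k),
      α.act (τj k z hz) (t * α.e (𝟙 (y k))) = t * α.e (𝟙 z) := by
    intro k t ht z hz
    rw [← (hτjgt k z hz).1, α.act_proj, ht (τj k z hz) (hτjH k z hz), (hτjgt k z hz).2]
  -- Lemma B : corner of an invariant is a group-invariant
  have lemB : ∀ (k : Fin r) (t : S), t ∈ α.invSet H →
      t * α.e (𝟙 (y k)) ∈ α.grpInvSet (y k) (H.arrows (y k) (y k)) := by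
    intro k t ht
    have habs : ∀ l : (y k) ⟶ (y k), α.e (𝟙 (y k)) * α.e l = α.e l := by
      intro l; rw [mul_comm]; exact α.e_le l
    exact ⟨by rw [mul_assoc, α.idem], fun l hl => by
      rw [α.act_mul, ht l hl, α.act_e_src, mul_assoc, α.idem, mul_assoc, habs l]⟩
  -- Lemma C : the key conjugation computation
  have lemC : ∀ (k : Fin r) ⦃a b : Obj⦄ (ha : a ∈ Y k) (hb : b ∈ Y k) (q : a ⟶ b) (t' : S),
      t' * α.e (𝟙 (y k)) = t' →
      α.act (τj k a ha ≫ q ≫ Groupoid.inv (τj k b hb)) t'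
        = t' * α.e (τj k a ha ≫ q ≫ Groupoid.inv (τj k b hb)) →
      α.act q (α.act (τj k a ha) t') = α.act (τj k b hb) t' * α.e q := by
    intro k a b ha hb q t' ht1 hl
    set τa := τj k a ha with hτa
    set τb := τj k b hb with hτb
    set l := τa ≫ q ≫ Groupoid.inv τb with hldef
    have hfl : l ≫ τb = τa ≫ q := by
      simp [hldef]
    have h2 : α.act τb (α.act l t') = α.act (τa ≫ q) t' * α.e τb := by
      rw [α.act_comp, hfl]
    have h3 : α.act (τa ≫ q) t' * α.e τb = α.act (τa ≫ q) t' := by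
      rw [(hτjgt k b hb).2]; exact absorbAct _ _
    have h4 : α.act τb (α.act l t') = α.act τb t' * (α.e (τa ≫ q) * α.e (𝟙 b)) := by
      rw [hl, α.act_mul, hEcomp l τb, hfl, (hτjgt k b hb).2]
    have h5 : α.act (τa ≫ q) t' = α.act τb t' * (α.e (τa ≫ q) * α.e (𝟙 b)) := by
      calc α.act (τa ≫ q) t' = α.act (τa ≫ q) t' * α.e τb := h3.symm
        _ = α.act τb (α.act l t') := h2.symm
        _ = α.act τb t' * (α.e (τa ≫ q) * α.e (𝟙 b)) := h4
    have hb1 : α.e (𝟙 b) * α.e q = α.e q := by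
      rw [mul_comm]; exact α.e_le q
    rw [α.act_comp, h5, mul_assoc, mul_assoc, hb1, key1 τa q (hτjgt k a ha).2]
  -- Lemma Ext : extension of a group-invariant to an invariant supported on Y k
  have lemExt : ∀ (k : Fin r) (t' : S), t' ∈ α.grpInvSet (y k) (H.arrows (y k) (y k)) →
      ∃ t ∈ α.invSet H,
        (∀ (z : Obj) (hz : z ∈ Y k), t * α.e (𝟙 z) = α.act (τj k z hz) t') ∧
        (∀ z : Obj, z ∉ Y k → t * α.e (𝟙 z) = 0) := by
    intro k t' ht'
    set t := ∑ z : Obj, if hz : z ∈ Y k then α.act (τj k z hz) t' else 0 with htdef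
    have hsupp : ∀ (a : Obj),
        t * α.e (𝟙 a) = if ha : a ∈ Y k then α.act (τj k a ha) t' else 0 := by
      intro a
      rw [htdef, Finset.sum_mul]
      rw [Finset.sum_eq_single a (fun z _ hza => by
        split_ifs with hz
        · rw [← α.act_mem (τj k z hz) t', (hτjgt k z hz).2, mul_assoc, horth z a hza,
            mul_zero]
        · simp) (by simp)]
      split_ifs with ha
      · rw [← (hτjgt k a ha).2]; exact α.act_mem _ _
      · simp
    have hinv : t ∈ α.invSet H := by
      intro a b h hh
      have step1 : α.act h t = α.act h (t * α.e (𝟙 a)) := stepProj h t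
      have hRb : t * α.e h = (t * α.e (𝟙 b)) * α.e h := by
        rw [mul_assoc, mul_comm (α.e (𝟙 b)) (α.e h), α.e_le h]
      by_cases ha : a ∈ Y k
      · have hb : b ∈ Y k := by
          obtain ⟨k', hb'⟩ := hYcover b
          rcases eq_or_ne k' k with rfl | hk'
          · exact hb'
          · exfalso
            have hemp := hYdisj k k' (fun hEq => hk' hEq.symm) a ha b hb'
            rw [hemp] at hh
            simpa using hh
        have hlmem : (τj k a ha ≫ h ≫ Groupoid.inv (τj k b hb)) ∈ H.arrows (y k) (y k) :=
          H.mul (hτjH k a ha) (H.mul hh (H.inv (hτjH k b hb)))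
        have hl := ht'.2 _ hlmem
        rw [step1, hsupp a, dif_pos ha, lemC k ha hb h t' ht'.1 hl, hRb, hsupp b,
          dif_pos hb]
      · have hb : b ∉ Y k := by
          intro hb
          obtain ⟨k', ha'⟩ := hYcover a
          have hk' : k' ≠ k := fun hEq => ha (hEq ▸ ha')
          have hemp := hYdisj k' k hk' a ha' b hb
          rw [hemp] at hh
          simpa using hh
        rw [step1, hsupp a, dif_neg ha, α.act_zero, hRb, hsupp b, dif_neg hb, zero_mul]
    exact ⟨t, hinv, fun z hz => by rw [hsupp z, dif_pos hz],
      fun z hz => by rw [hsupp z, dif_neg hz]⟩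
  -- main statement
  intro u v g
  constructor
  · intro hg
    obtain ⟨j, hu⟩ := hYcover u
    have hv : v ∈ Y j := by
      by_contra hv
      obtain ⟨t0, ht0, hpos, hneg⟩ := lemExt j (α.e (𝟙 (y j)))
        (α.grpInvSet_unit_mem (y j) _)
      have h1 := hg t0 ht0
      have hL : α.act g t0 = α.e g := by
        rw [stepProj g t0, hpos u hu, α.act_e_src, (hτjgt j u hu).2, α.act_e_src]
      have hR : t0 * α.e g = 0 := by
        have : t0 * α.e g = (t0 * α.e (𝟙 v)) * α.e g := by
          rw [mul_assoc, mul_comm (α.e (𝟙 v)) (α.e g), α.e_le g]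
        rw [this, hneg v hv, zero_mul]
      rw [hL, hR] at h1
      exact hne g h1
    refine ⟨j, hu, hv, ?_⟩
    intro t' ht'
    obtain ⟨t, htinv, hpos, _⟩ := lemExt j t' ht'
    have h1 := hg t htinv
    set τu := τj j u hu with hτu
    set τv := τj j v hv with hτv
    set l := τu ≫ g ≫ Groupoid.inv τv with hldef
    set g' := g ≫ Groupoid.inv τv with hg'def
    rw [stepProj g t, hpos u hu, α.act_comp] at h1
    have hRt : t * α.e g = α.act τv t' * α.e g := by
      have : t * α.e g = (t * α.e (𝟙 v)) * α.e g := by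
        rw [mul_assoc, mul_comm (α.e (𝟙 v)) (α.e g), α.e_le g]
      rw [this, hpos v hv]
    rw [hRt] at h1
    -- h1 : α.act (τu ≫ g) t' * α.e g = α.act τv t' * α.e g
    have happ := congrArg (α.act (Groupoid.inv τv)) h1
    rw [α.act_mul, α.act_mul] at happ
    have hinvg : α.act (Groupoid.inv τv) (α.e g) = α.e g' := by
      rw [hEcomp g (Groupoid.inv τv), ← hg'def, (hτjgt j v hv).1, α.e_le g']
    have hfe : (τu ≫ g) ≫ Groupoid.inv τv = l := by rw [hldef, Category.assoc]
    have hLapp : α.act (Groupoid.inv τv) (α.act (τu ≫ g) t') = α.act l t' := by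
      rw [α.act_comp, hfe, (hτjgt j v hv).1, absorbAct]
    have hRapp : α.act (Groupoid.inv τv) (α.act τv t') = t' := by
      rw [α.act_inv, (hτjgt j v hv).1, ht'.1]
    rw [hLapp, hRapp, hinvg] at happ
    -- happ : α.act l t' * α.e g' = t' * α.e g'
    have hEl : α.e l = α.e g' := by
      have e1 : α.e g' * α.e l = α.e l := by
        have h6 := hEcomp (Groupoid.inv τu) l
        rw [(hτjgt j u hu).1, α.act_e_src] at h6
        have hgl : Groupoid.inv τu ≫ l = g' := by
          rw [hldef, hg'def]; simp
        rw [hgl] at h6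
        exact h6.symm
      have e2 : α.e l * α.e g' = α.e g' := by
        have h7 := key1 τu g' (hτjgt j u hu).2
        have hgl2 : τu ≫ g' = l := by rw [hldef, hg'def]
        rw [hgl2] at h7
        exact h7
      calc α.e l = α.e g' * α.e l := e1.symm
        _ = α.e l * α.e g' := mul_comm _ _
        _ = α.e g' := e2
    calc α.act l t' = α.act l t' * α.e l := (α.act_mem l t').symm
      _ = α.act l t' * α.e g' := by rw [hEl]
      _ = t' * α.e g' := happ
      _ = t' * α.e l := by rw [hEl]
  · rintro ⟨k, hu, hv, hl⟩ t ht
    have ht' := lemB k t ht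
    have h1 : α.act g t = α.act g (α.act (τj k u hu) (t * α.e (𝟙 (y k)))) := by
      rw [lemA k t ht u hu, ← stepProj g t]
    rw [h1, lemC k hu hv g (t * α.e (𝟙 (y k))) ht'.1 (hl _ ht'), lemA k t ht v hv,
      mul_assoc, mul_comm (α.e (𝟙 v)) (α.e g), α.e_le g]

end PaperGalois
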